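/- BDLP relative-bound estimate: let a⁻, a⁺ : ℝᵈ → ℝ≥0, constants m, z, b, ϑ > 0, C > ϑ, and suppose (i) ∑_{x∈η}∑_{y∈η\x} a⁺(x−y) ≤ ϑ·∑_{x∈η}∑_{y∈η\x} a⁻(x−y) + b·|η| for all finite η ⊂ ℝᵈ, and (ii) m > C‖a⁻‖₁ + (b+z)/C + ‖a⁺‖₁. Define c(η) = (m + C‖a⁻‖₁ + z/C + ‖a⁺‖₁)|η| + ∑_{x∈η}∑_{y∈η\x} a⁻(x−y) + (1/C)∑_{x∈η}∑_{y∈η\x} a⁺(x−y) and M(η) = m|η| + ∑_{x∈η}∑_{y∈η\x} a⁻(x−y). Then c(η) ≤ (1 + a)·M(η) for all finite η, where a = max{(C‖a⁻‖₁ + (b+z)/C + ‖a⁺‖₁)/m, ϑ/C} < 1. -/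
import Mathlib


open MeasureTheory

/-- BDLP relative-bound estimate verifying condition (E2) for the BDLP environment. -/
theorem bdlp_relative_bound (d : ℕ) (am ap : (Fin d → ℝ) → ℝ)
    (ham : ∀ x, 0 ≤ am x) (hap : ∀ x, 0 ≤ ap x)
    (m z b ϑ C nam nap : ℝ) (hm : 0 < m) (hz : 0 < z) (hb : 0 < b)
    (hϑ : 0 < ϑ) (hϑC : ϑ < C)
    (hnam : nam = ∫ x, am x) (hnap : nap = ∫ x, ap x)
    (hstab : ∀ η : Finset (Fin d → ℝ),
      ∑ x ∈ η, ∑ y ∈ η.erase x, ap (x - y)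
        ≤ ϑ * ∑ x ∈ η, ∑ y ∈ η.erase x, am (x - y) + b * η.card)
    (hmain : C * nam + (b + z) / C + nap < m) :
    (∀ η : Finset (Fin d → ℝ),
      (m + C * nam + z / C + nap) * η.card
          + ∑ x ∈ η, ∑ y ∈ η.erase x, am (x - y)
          + (1 / C) * ∑ x ∈ η, ∑ y ∈ η.erase x, ap (x - y)
        ≤ (1 + max ((C * nam + (b + z) / C + nap) / m) (ϑ / C)) *
            (m * η.card + ∑ x ∈ η, ∑ y ∈ η.erase x, am (x - y))) ∧
    max ((C * nam + (b + z) / C + nap) / m) (ϑ / C) < 1 := by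
  have hC : 0 < C := hϑ.trans hϑC
  set a := max ((C * nam + (b + z) / C + nap) / m) (ϑ / C) with ha
  have ha1 : a < 1 := by
    apply max_lt
    · rw [div_lt_one hm]; linarith
    · rw [div_lt_one hC]; exact hϑC
  refine ⟨fun η => ?_, ha1⟩
  set Sm := ∑ x ∈ η, ∑ y ∈ η.erase x, am (x - y) with hSmdef
  set Sp := ∑ x ∈ η, ∑ y ∈ η.erase x, ap (x - y) with hSpdef
  have hSm : 0 ≤ Sm :=
    Finset.sum_nonneg fun x _ => Finset.sum_nonneg fun y _ => ham _
  have hcard : (0:ℝ) ≤ η.card := Nat.cast_nonneg _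
  have h1 : (C * nam + (b + z) / C + nap) / m ≤ a := le_max_left _ _
  have h2 : ϑ / C ≤ a := le_max_right _ _
  have h1' : C * nam + (b + z) / C + nap ≤ a * m := by
    rw [div_le_iff₀ hm] at h1; linarith
  have hstab' : Sp ≤ ϑ * Sm + b * η.card := hstab η
  have k1 : (1 / C) * Sp ≤ (1 / C) * (ϑ * Sm + b * η.card) :=
    mul_le_mul_of_nonneg_left hstab' (by positivity)
  have k2 : (ϑ / C) * Sm ≤ a * Sm := mul_le_mul_of_nonneg_right h2 hSm
  have k3 : (C * nam + (b + z) / C + nap) * η.card ≤ a * m * η.card :=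
    mul_le_mul_of_nonneg_right h1' hcard
  have e1 : (1 / C) * (ϑ * Sm + b * η.card) = (ϑ / C) * Sm + (b / C) * η.card := by
    field_simp
  have e2 : (b + z) / C = b / C + z / C := by ring
  nlinarith [k1, k2, k3]
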